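/- For every integer n ≥ 1, K(g_{n+2}/g_n) ≥ g_{n+2}/g_{n+1}. (In the paper's notation: K(b_n) ≥ √(a_{n+1}), where b_n = g_{n+2}/g_n and a_{n+1} = (g_{n+2}/g_{n+1})².) -/

import Mathlib

open scoped Classical

/-- Number of lattice points `(x, y) ∈ ℕ²` with `x + a·y ≤ A + a·B`. -/
noncomputable def latticeCount (a : ℝ) (A B : ℕ) : ℕ :=
  Set.ncard {p : ℕ × ℕ | (p.1 : ℝ) + a * (p.2 : ℝ) ≤ (A : ℝ) + a * (B : ℝ)}

/-- The smallest positive integer `d` with `latticeCount a A B ≤ (d+1)(d+2)/2`. -/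
noncomputable def dAB (a : ℝ) (A B : ℕ) : ℕ :=
  sInf {d : ℕ | 0 < d ∧ 2 * latticeCount a A B ≤ (d + 1) * (d + 2)}

/-- `k_{A,B}(a) = (A + B·a) / d_{A,B}(a)`. -/
noncomputable def kAB (a : ℝ) (A B : ℕ) : ℝ :=
  ((A : ℝ) + (B : ℝ) * a) / (dAB a A B : ℝ)

/-- `K(a)` for irrational `a`: the supremum of `k_{A,B}(a)` over all `A, B ≥ 0`. -/
noncomputable def Kirr (a : ℝ) : ℝ :=
  ⨆ p : ℕ × ℕ, kAB a p.1 p.2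

/-- The capacity function `K`: for irrational `a` it is `Kirr a`; for rational
`a` it is the supremum of `Kirr z` over irrational `z` with `1 < z < a`. -/
noncomputable def Kcap (a : ℝ) : ℝ :=
  if Irrational a then Kirr a
  else sSup {x : ℝ | ∃ z : ℝ, Irrational z ∧ 1 < z ∧ z < a ∧ x = Kirr z}

/-- The odd-index Fibonacci numbers `g n = f_{2n-1}`:
`g 1 = 1`, `g 2 = 2`, `g 3 = 5`, `g 4 = 13`, … -/
def g (n : ℕ) : ℕ := Nat.fib (2 * n - 1)


lemma g_rec (m : ℕ) : g (m+1) + g (m+3) = 3 * g (m+2) := by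
  show Nat.fib (2*(m+1)-1) + Nat.fib (2*(m+3)-1) = 3 * Nat.fib (2*(m+2)-1)
  have h1 : 2*(m+1)-1 = 2*m+1 := by omega
  have h2 : 2*(m+3)-1 = 2*m+5 := by omega
  have h3 : 2*(m+2)-1 = 2*m+3 := by omega
  rw [h1, h2, h3]
  have e5 : Nat.fib (2*m+5) = Nat.fib (2*m+3) + Nat.fib (2*m+4) := Nat.fib_add_two
  have e4 : Nat.fib (2*m+4) = Nat.fib (2*m+2) + Nat.fib (2*m+3) := Nat.fib_add_two
  have e3 : Nat.fib (2*m+3) = Nat.fib (2*m+1) + Nat.fib (2*m+2) := Nat.fib_add_two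
  omega

lemma g_prod (m : ℕ) : g (m+1) * g (m+3) = g (m+2) * g (m+2) + 1 := by
  induction m with
  | zero => decide
  | succ k ih =>
    have h1 := g_rec k
    have h2 := g_rec (k+1)
    zify at ih h1 h2 ⊢
    linear_combination (-(g (k+3) : ℤ)) * h1 + (g (k+2) : ℤ) * h2 + ih

lemma g_mod3 (m : ℕ) : g (m+1) % 3 ≠ 0 ∧ g (m+2) % 3 ≠ 0 := by
  induction m with
  | zero => decide
  | succ k ih =>
    have h1 := g_rec k
    refine ⟨ih.2, ?_⟩
    show g (k+3) % 3 ≠ 0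
    omega

lemma g_pos (m : ℕ) : 0 < g (m+1) := Nat.fib_pos.mpr (by omega)

lemma g_lt (m : ℕ) : g (m+1) < g (m+2) := by
  show Nat.fib (2*(m+1)-1) < Nat.fib (2*(m+2)-1)
  have h1 : 2*(m+1)-1 = 2*m+1 := by omega
  have h3 : 2*(m+2)-1 = 2*m+3 := by omega
  rw [h1, h3]
  calc Nat.fib (2*m+1) ≤ Nat.fib (2*m+2) := Nat.fib_mono (by omega)
    _ < Nat.fib (2*m+3) := Nat.fib_lt_fib_succ (by omega)

lemma g_coprime (m : ℕ) : Nat.Coprime (g (m+1)) (g (m+3)) := by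
  have h1 := g_rec m
  have h2 := g_prod m
  have h3 := (g_mod3 m).1
  by_contra h
  obtain ⟨P, hP, hPa, hPc⟩ := Nat.Prime.not_coprime_iff_dvd.mp h
  have hp3b : P ∣ 3 * g (m+2) := h1 ▸ Nat.dvd_add hPa hPc
  rcases (Nat.Prime.dvd_mul hP).mp hp3b with h3p | hb
  · have hP3 : P = 3 := (Nat.prime_dvd_prime_iff_eq hP Nat.prime_three).mp h3p
    subst hP3
    exact h3 (Nat.dvd_iff_mod_eq_zero.mp hPa)
  · have hd1 : P ∣ g (m+2) * g (m+2) + 1 := h2 ▸ Dvd.dvd.mul_right hPa _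
    have hd2 : P ∣ g (m+2) * g (m+2) := hb.mul_left _
    have : P ∣ 1 := (Nat.dvd_add_right hd2).mp hd1
    exact Nat.Prime.one_lt hP |>.ne' (Nat.dvd_one.mp this)

lemma count_exact (p G : ℕ) (hp : 0 < p) (hpG : p < G) (hcop : Nat.Coprime p G)
    (z : ℝ) (hz : Irrational z) (hz0 : 1 < z)
    (hz1 : (G:ℝ)/p - 1/(p*p) < z) (hz2 : z < (G:ℝ)/p) :
    2 * latticeCount z 0 p = (G+1)*(p+1) := by
  classical
  have hP : (0:ℝ) < p := by exact_mod_cast hp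
  have hz1' : (G:ℝ)*p - 1 < z*(p*p) := by
    have he : (G:ℝ)/p - 1/(p*p) = ((G:ℝ)*p - 1)/(p*p) := by field_simp
    rw [he, div_lt_iff₀ (by positivity)] at hz1
    exact hz1
  set R : Finset (ℕ × ℕ) := Finset.range (G+1) ×ˢ Finset.range (p+1) with hR
  set Slt : Finset (ℕ × ℕ) := R.filter (fun pr => p * pr.1 + G * pr.2 < p * G) with hSlt
  set Sgt : Finset (ℕ × ℕ) := R.filter (fun pr => p * G < p * pr.1 + G * pr.2) with hSgt
  set Deq : Finset (ℕ × ℕ) := R.filter (fun pr => p * pr.1 + G * pr.2 = p * G) with hDeq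
  -- the lattice set is Slt plus the corner (0,p)
  have hmem : ∀ x y : ℕ, ((x:ℝ) + z * y ≤ ((0:ℕ):ℝ) + z * ((p:ℕ):ℝ)) ↔
      ((x,y) ∈ Slt ∨ (x,y) = (0, p)) := by
    intro x y
    rw [hSlt, Finset.mem_filter, hR, Finset.mem_product, Finset.mem_range, Finset.mem_range]
    simp only []
    constructor
    · intro h
      push_cast at h
      rcases lt_trichotomy y p with hy | hy | hy
      · left
        have hyR : (y:ℝ) < p := by exact_mod_cast hy
        have hcast : ((p - y : ℕ):ℝ) = (p:ℝ) - y := by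
          push_cast [Nat.cast_sub (le_of_lt hy)]; ring
        have hirr : Irrational (z * ((p - y : ℕ):ℝ)) := hz.mul_natCast (by omega)
        have hxlt : (x:ℝ) < z * ((p - y : ℕ):ℝ) := by
          have hle : (x:ℝ) ≤ z * ((p - y : ℕ):ℝ) := by rw [hcast]; nlinarith
          rcases lt_or_eq_of_le hle with h' | h'
          · exact h'
          · exact absurd ⟨(x:ℚ), by rw [← h']; push_cast; ring⟩ hirr
        -- get the integer inequality p*x < G*(p-y)
        have hnat : p * x < G * (p - y) := by
          have : (p:ℝ) * x < G * ((p - y : ℕ):ℝ) := by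
            rw [hcast]
            have h2 : z * ((p:ℝ) - y) < (G:ℝ)/p * ((p:ℝ) - y) := by
              apply mul_lt_mul_of_pos_right hz2 (by linarith)
            rw [hcast] at hxlt
            rw [div_mul_eq_mul_div, lt_div_iff₀ hP] at h2
            nlinarith
          exact_mod_cast this
        have hGyp : G * y ≤ G * p := Nat.mul_le_mul_left G (le_of_lt hy)
        have hsub : G * (p - y) = G * p - G * y := Nat.mul_sub G p y
        have hcomm : p * G = G * p := Nat.mul_comm p G
        have hxG : x < G := by
          have h1 : p * x < G * p := lt_of_lt_of_le hnat (by
            calc G * (p - y) ≤ G * p := Nat.mul_le_mul_left G (Nat.sub_le p y))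
          by_contra hcon
          push_neg at hcon
          have : p * G ≤ p * x := Nat.mul_le_mul_left p hcon
          omega
        refine ⟨⟨by omega, by omega⟩, by omega⟩
      · right; subst hy
        have : (x:ℝ) ≤ 0 := by nlinarith
        have : x = 0 := by exact_mod_cast le_antisymm this (by positivity)
        simp [this]
      · exfalso
        have hyR : (p:ℝ) < y := by exact_mod_cast hy
        nlinarith [Nat.cast_nonneg (α := ℝ) x]
    · rintro (⟨⟨hxG, hyp⟩, hlt⟩ | heq)
      · push_cast
        have hyp' : y ≤ p := by omega
        have hy0 : p * x + G * y + 1 ≤ p * G := hlt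
        have hsub : G * (p - y) = G * p - G * y := Nat.mul_sub G p y
        have hGyp : G * y ≤ G * p := Nat.mul_le_mul_left G hyp'
        have hcomm : p * G = G * p := Nat.mul_comm p G
        have hnat : p * x + 1 ≤ G * (p - y) := by omega
        have hcast : ((p - y : ℕ):ℝ) = (p:ℝ) - y := by
          push_cast [Nat.cast_sub hyp']; ring
        have hreal : (p:ℝ) * x + 1 ≤ G * ((p:ℝ) - y) := by
          rw [← hcast]; exact_mod_cast hnat
        -- x < z*(p-y) since z > G/p - 1/p^2
        have hTle : (p:ℝ) - y ≤ p := by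
          have : (0:ℝ) ≤ y := Nat.cast_nonneg y
          linarith
        have hylt : y < p := by
          by_contra hcc
          push_neg at hcc
          have : y = p := le_antisymm hyp' hcc
          subst this
          omega
        have hT1 : (0:ℝ) < (p:ℝ) - y := by
          have : (y:ℝ) < p := by exact_mod_cast hylt
          linarith
        have key : (x:ℝ) < z * ((p:ℝ) - y) := by
          nlinarith [mul_lt_mul_of_pos_right hz1' hT1,
            mul_le_mul_of_nonneg_right hreal (le_of_lt hP), mul_pos hP hP,
            Nat.cast_nonneg (α := ℝ) y]
        linarith
      · rw [Prod.mk.injEq] at heq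
        obtain ⟨rfl, rfl⟩ := heq
        push_cast
        linarith
  -- the lattice set as a finset
  have hcorner : (0, p) ∉ Slt := by
    rw [hSlt, Finset.mem_filter]
    rintro ⟨-, hc⟩
    simp only [] at hc
    have hcomm : p * G = G * p := Nat.mul_comm p G
    omega
    
  have hcount : latticeCount z 0 p = Slt.card + 1 := by
    have hset : {pr : ℕ × ℕ | (pr.1:ℝ) + z * (pr.2:ℝ) ≤ ((0:ℕ):ℝ) + z * ((p:ℕ):ℝ)}
        = ↑(insert ((0:ℕ), p) Slt) := by
      ext ⟨x, y⟩
      rw [Set.mem_setOf_eq, Finset.coe_insert, Set.mem_insert_iff, Finset.mem_coe]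
      rw [hmem x y]
      tauto
    rw [latticeCount, hset, Set.ncard_coe_finset, Finset.card_insert_of_notMem hcorner]
  -- cardinality of the rectangle splits in three
  have hunion : Slt ∪ Sgt ∪ Deq = R := by
    ext pr
    obtain ⟨x, y⟩ := pr
    simp only [Finset.mem_union, hSlt, hSgt, hDeq, Finset.mem_filter]
    constructor
    · rintro ((⟨h, -⟩ | ⟨h, -⟩) | ⟨h, -⟩) <;> exact h
    · intro h
      rcases lt_trichotomy (p * (x,y).1 + G * (x,y).2) (p * G) with h' | h' | h'
      · exact Or.inl (Or.inl ⟨h, h'⟩)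
      · exact Or.inr ⟨h, h'⟩
      · exact Or.inl (Or.inr ⟨h, h'⟩)
  have hd1 : Disjoint Slt Sgt := by
    rw [Finset.disjoint_left]
    rintro pr h1 h2
    rw [hSlt, Finset.mem_filter] at h1
    rw [hSgt, Finset.mem_filter] at h2
    exact absurd h2.2 (lt_asymm h1.2)
  have hd2 : Disjoint (Slt ∪ Sgt) Deq := by
    rw [Finset.disjoint_left]
    rintro pr h1 h2
    rw [hDeq, Finset.mem_filter] at h2
    rw [Finset.mem_union, hSlt, hSgt, Finset.mem_filter, Finset.mem_filter] at h1
    rcases h1 with ⟨-, h1⟩ | ⟨-, h1⟩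
    · exact absurd h2.2 (ne_of_lt h1)
    · exact absurd h2.2.symm (ne_of_lt h1)
  have hcards : Slt.card + Sgt.card + Deq.card = (G+1)*(p+1) := by
    have := Finset.card_union_of_disjoint hd2
    rw [hunion] at this
    rw [Finset.card_union_of_disjoint hd1] at this
    rw [← this, hR]
    simp [Finset.card_product]
  -- bijection between Slt and Sgt
  have hbij : Slt.card = Sgt.card := by
    apply Finset.card_bij' (fun pr _ => (G - pr.1, p - pr.2)) (fun pr _ => (G - pr.1, p - pr.2))
    · rintro ⟨x, y⟩ h
      rw [hSlt, Finset.mem_filter, hR, Finset.mem_product, Finset.mem_range, Finset.mem_range] at h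
      obtain ⟨⟨hx, hy⟩, hlt⟩ := h
      simp only [] at hlt ⊢
      rw [hSgt, Finset.mem_filter, hR, Finset.mem_product, Finset.mem_range, Finset.mem_range]
      have e1 : p * (G - x) = p * G - p * x := Nat.mul_sub p G x
      have e2 : G * (p - y) = G * p - G * y := Nat.mul_sub G p y
      have e3 : p * x ≤ p * G := Nat.mul_le_mul_left p (by omega)
      have e4 : G * y ≤ G * p := Nat.mul_le_mul_left G (by omega)
      have hcomm : p * G = G * p := Nat.mul_comm p G
      simp only []
      refine ⟨⟨by omega, by omega⟩, by omega⟩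
    · rintro ⟨x, y⟩ h
      rw [hSgt, Finset.mem_filter, hR, Finset.mem_product, Finset.mem_range, Finset.mem_range] at h
      obtain ⟨⟨hx, hy⟩, hlt⟩ := h
      simp only [] at hlt ⊢
      rw [hSlt, Finset.mem_filter, hR, Finset.mem_product, Finset.mem_range, Finset.mem_range]
      have e1 : p * (G - x) = p * G - p * x := Nat.mul_sub p G x
      have e2 : G * (p - y) = G * p - G * y := Nat.mul_sub G p y
      have e3 : p * x ≤ p * G := Nat.mul_le_mul_left p (by omega)
      have e4 : G * y ≤ G * p := Nat.mul_le_mul_left G (by omega)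
      have hcomm : p * G = G * p := Nat.mul_comm p G
      simp only []
      refine ⟨⟨by omega, by omega⟩, by omega⟩
    · rintro ⟨x, y⟩ h
      rw [hSlt, Finset.mem_filter, hR, Finset.mem_product, Finset.mem_range, Finset.mem_range] at h
      obtain ⟨⟨hx, hy⟩, -⟩ := h
      simp only [Prod.mk.injEq]
      omega
    · rintro ⟨x, y⟩ h
      rw [hSgt, Finset.mem_filter, hR, Finset.mem_product, Finset.mem_range, Finset.mem_range] at h
      obtain ⟨⟨hx, hy⟩, -⟩ := h
      simp only [Prod.mk.injEq]
      omega
  -- Deq has exactly two elements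
  have hDeqcard : Deq.card = 2 := by
    have : Deq = {(G, 0), (0, p)} := by
      ext ⟨x, y⟩
      rw [hDeq, Finset.mem_filter, hR, Finset.mem_product, Finset.mem_range, Finset.mem_range]
      simp only [Finset.mem_insert, Finset.mem_singleton, Prod.mk.injEq]
      constructor
      · rintro ⟨⟨hx, hy⟩, heq⟩
        have hcomm : p * G = G * p := Nat.mul_comm p G
        have hyle : y ≤ p := by omega
        have e2 : G * (p - y) = G * p - G * y := Nat.mul_sub G p y
        have e4 : G * y ≤ G * p := Nat.mul_le_mul_left G hyle
        have hdvd : p * x = G * (p - y) := by omega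
        have hGx : G ∣ x := Nat.Coprime.dvd_of_dvd_mul_left hcop.symm ⟨p - y, hdvd⟩
        rcases hGx with ⟨c, rfl⟩
        have hGpos : 0 < G := by omega
        have hc1 : c ≤ 1 := by
          by_contra hcc
          push_neg at hcc
          have h2 : G * 2 ≤ G * c := Nat.mul_le_mul_left G hcc
          omega
        rcases (by omega : c = 0 ∨ c = 1) with rfl | rfl
        · right
          refine ⟨by simp, ?_⟩
          have e0 : p * (G * 0) = 0 := by ring
          have : G * y = G * p := by omega
          exact Nat.eq_of_mul_eq_mul_left hGpos this
        · left
          refine ⟨by simp, ?_⟩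
          have e0 : p * (G * 1) = p * G := by ring
          have h0 : G * y = 0 := by omega
          have := Nat.mul_eq_zero.mp h0
          omega
      · rintro (⟨rfl, rfl⟩ | ⟨rfl, rfl⟩) <;>
          exact ⟨⟨by omega, by omega⟩, by ring⟩
    rw [this]
    rw [Finset.card_insert_of_notMem (by
      simp only [Finset.mem_singleton, Prod.mk.injEq]
      rintro ⟨h1, -⟩
      omega), Finset.card_singleton]
  omega

lemma dAB_eq (p q G : ℕ) (hq : 0 < q) (z : ℝ)
    (hcnt : 2 * latticeCount z 0 p = (G+1)*(p+1))
    (hid : p * G = q * q + 1) (hsum : p + G = 3 * q) :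
    dAB z 0 p = q := by
  have hc2 : 2 * latticeCount z 0 p = (q+1)*(q+2) := by
    rw [hcnt]; zify at hid hsum ⊢; linear_combination hid + hsum
  rw [dAB]
  apply le_antisymm
  · exact Nat.sInf_le ⟨hq, le_of_eq hc2⟩
  · refine le_csInf ⟨q, ⟨hq, le_of_eq hc2⟩⟩ ?_
    rintro d ⟨hd0, hdle⟩
    by_contra hlt
    push_neg at hlt
    rw [hc2] at hdle
    nlinarith

lemma latticeCount_finite (C : ℕ) (hC : 1 ≤ C) (z : ℝ) (hz1 : 1 ≤ z) (hz2 : z ≤ C) (A B : ℕ) :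
    {pr : ℕ × ℕ | (pr.1 : ℝ) + z * (pr.2 : ℝ) ≤ (A : ℝ) + z * (B : ℝ)}.Finite := by
  apply Set.Finite.subset (Set.finite_Icc ((0:ℕ),(0:ℕ)) (A + C*B, A + B))
  rintro ⟨x, y⟩ hxy
  rw [Set.mem_setOf_eq] at hxy
  simp only [] at hxy
  simp only [Set.mem_Icc, Prod.mk_le_mk]
  have hy0 : (0:ℝ) ≤ (y:ℝ) := Nat.cast_nonneg y
  have hx0 : (0:ℝ) ≤ (x:ℝ) := Nat.cast_nonneg x
  have hB0 : (0:ℝ) ≤ (B:ℝ) := Nat.cast_nonneg B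
  have hzy : (0:ℝ) ≤ z * y := by positivity
  constructor
  · exact ⟨Nat.zero_le x, Nat.zero_le y⟩
  constructor
  · -- x ≤ A + C*B
    have : (x:ℝ) ≤ (A:ℝ) + C*B := by nlinarith [mul_le_mul_of_nonneg_right hz2 hB0]
    exact_mod_cast (by push_cast; exact this : (x:ℝ) ≤ ((A + C*B : ℕ):ℝ))
  · -- y ≤ A + B
    have : (y:ℝ) ≤ (A:ℝ) + B := by
      rcases le_or_gt (y:ℝ) (B:ℝ) with h | h
      · linarith
      · nlinarith
    exact_mod_cast (by push_cast; exact this : (y:ℝ) ≤ ((A + B : ℕ):ℝ))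

lemma dAB_mem (C : ℕ) (hC : 1 ≤ C) (z : ℝ) (hz1 : 1 ≤ z) (hz2 : z ≤ C) (A B : ℕ) :
    0 < dAB z A B ∧ 2 * latticeCount z A B ≤ (dAB z A B + 1) * (dAB z A B + 2) := by
  have hne : {d : ℕ | 0 < d ∧ 2 * latticeCount z A B ≤ (d + 1) * (d + 2)}.Nonempty := by
    refine ⟨2 * latticeCount z A B + 1, by omega, ?_⟩
    calc 2 * latticeCount z A B ≤ 2 * latticeCount z A B + 1 + 1 := by omega
      _ ≤ (2 * latticeCount z A B + 1 + 1) * (2 * latticeCount z A B + 1 + 2) :=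
          Nat.le_mul_of_pos_right _ (by omega)
  exact Nat.sInf_mem hne

lemma key_ineq (C : ℕ) (hC : 1 ≤ C) (z : ℝ) (hz1 : 1 ≤ z) (hz2 : z ≤ C) (A B : ℕ) :
    A + B ≤ 18 * C * dAB z A B := by
  obtain ⟨hd0, hdle⟩ := dAB_mem C hC z hz1 hz2 A B
  set d := dAB z A B with hd
  set s := A + B with hs
  by_contra hcon
  push_neg at hcon
  set u := s / 2 with hu
  set v := s / (2*C) with hv
  have hfin := latticeCount_finite C hC z hz1 hz2 A B
  have huv : u + C * v ≤ s := by
    have h2 : C * v ≤ s / 2 := by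
      rw [hv, ← Nat.div_div_eq_div_mul]
      exact Nat.mul_div_le (s / 2) C
    omega
  have hgrid : ↑(Finset.range (u+1) ×ˢ Finset.range (v+1)) ⊆
      {pr : ℕ × ℕ | (pr.1 : ℝ) + z * (pr.2 : ℝ) ≤ (A : ℝ) + z * (B : ℝ)} := by
    rintro ⟨x, y⟩ hxy
    simp only [Finset.coe_product, Finset.coe_range, Set.mem_prod, Set.mem_Iio] at hxy
    obtain ⟨hx, hy⟩ := hxy
    rw [Set.mem_setOf_eq]
    have hxu : (x:ℝ) ≤ u := by exact_mod_cast Nat.lt_succ_iff.mp hx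
    have hyv : (y:ℝ) ≤ v := by exact_mod_cast Nat.lt_succ_iff.mp hy
    have hzy : z * y ≤ (C:ℝ) * v := by
      apply mul_le_mul hz2 hyv (Nat.cast_nonneg y) (by positivity)
    have hsr : (u:ℝ) + C * v ≤ s := by exact_mod_cast (by push_cast; exact_mod_cast huv : ((u + C*v : ℕ):ℝ) ≤ ((s:ℕ):ℝ))
    have hBz : (s:ℝ) ≤ (A:ℝ) + z * B := by
      have : (B:ℝ) ≤ z * B := le_mul_of_one_le_left (Nat.cast_nonneg B) hz1
      rw [hs]; push_cast; linarith
    linarith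
  have hcard : (u+1)*(v+1) ≤ latticeCount z A B := by
    have h := Set.ncard_le_ncard hgrid hfin
    rwa [Set.ncard_coe_finset, Finset.card_product, Finset.card_range, Finset.card_range] at h
  have h1 : s < 2*(u+1) := by omega
  have h2 : s < (v+1)*(2*C) := (Nat.div_lt_iff_lt_mul (by omega)).mp (by omega)
  have e1 : s*s < (2*(u+1)) * ((v+1)*(2*C)) :=
    mul_lt_mul'' h1 h2 (Nat.zero_le s) (Nat.zero_le s)
  have e1' : (2*(u+1)) * ((v+1)*(2*C)) = 4*C*((u+1)*(v+1)) := by ring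
  have e2 : 4*C*((u+1)*(v+1)) ≤ 4*C*(latticeCount z A B) := Nat.mul_le_mul_left _ hcard
  have e3 : 4*C*(latticeCount z A B) = 2*C*(2*latticeCount z A B) := by ring
  have e4 : 2*C*(2*latticeCount z A B) ≤ 2*C*((d+1)*(d+2)) := Nat.mul_le_mul_left _ hdle
  have e5 : (d+1)*(d+2) ≤ 6*(d*d) := by nlinarith
  have e6 : 2*C*((d+1)*(d+2)) ≤ 2*C*(6*(d*d)) := Nat.mul_le_mul_left _ e5
  have e8 : 2*C*(6*(d*d)) = 12*(C*(d*d)) := by ring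
  have e9 : (18*C*d)*(18*C*d) < s*s := mul_lt_mul'' hcon hcon (Nat.zero_le _) (Nat.zero_le _)
  have e10 : C ≤ C*C := Nat.le_mul_of_pos_left C (by omega)
  have e11 : C*(d*d) ≤ (C*C)*(d*d) := Nat.mul_le_mul_right (d*d) e10
  have e12 : 324*((C*C)*(d*d)) = (18*C*d)*(18*C*d) := by ring
  have final1 : s*s < 12*(C*(d*d)) := by omega
  have final2 : 12*(C*(d*d)) ≤ 12*((C*C)*(d*d)) := by omega
  omega

lemma kAB_le (C : ℕ) (hC : 1 ≤ C) (z : ℝ) (hz1 : 1 ≤ z) (hz2 : z ≤ C) (A B : ℕ) :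
    kAB z A B ≤ 18 * (C:ℝ) * C := by
  obtain ⟨hd0, -⟩ := dAB_mem C hC z hz1 hz2 A B
  have hkey := key_ineq C hC z hz1 hz2 A B
  rw [kAB]
  have hdpos : (0:ℝ) < (dAB z A B : ℝ) := by exact_mod_cast hd0
  rw [div_le_iff₀ hdpos]
  have hkey' : (A:ℝ) + B ≤ 18*C*(dAB z A B) := by exact_mod_cast hkey
  have hC' : (1:ℝ) ≤ C := by exact_mod_cast hC
  have hb : (B:ℝ)*z ≤ B*C := mul_le_mul_of_nonneg_left hz2 (Nat.cast_nonneg B)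
  nlinarith [Nat.cast_nonneg (α := ℝ) A, Nat.cast_nonneg (α := ℝ) B,
    mul_nonneg (sub_nonneg.mpr hC') (Nat.cast_nonneg (α := ℝ) A),
    mul_nonneg (sub_nonneg.mpr hC') (Nat.cast_nonneg (α := ℝ) B),
    mul_le_mul_of_nonneg_left hkey' (by positivity : (0:ℝ) ≤ (C:ℝ))]


/-- **Lemma 2.23 (le:ECH2).** `K(b_n) ≥ √(a_{n+1})` for all `n ≥ 1`, where
`b_n = g_{n+2}/g_n` and `√(a_{n+1}) = g_{n+2}/g_{n+1}`. -/
theorem stmt_8 (n : ℕ) (hn : 1 ≤ n) :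
    (g (n + 2) : ℝ) / (g (n + 1) : ℝ) ≤ Kcap ((g (n + 2) : ℝ) / (g n : ℝ)) := by
  obtain ⟨m, rfl⟩ : ∃ m, n = m + 1 := ⟨n - 1, by omega⟩
  show (g (m+3) : ℝ) / (g (m+2) : ℝ) ≤ Kcap ((g (m+3) : ℝ) / (g (m+1) : ℝ))
  set p := g (m+1) with hp
  set q := g (m+2) with hq
  set G := g (m+3) with hG
  have hsum : p + G = 3 * q := g_rec m
  have hid : p * G = q * q + 1 := g_prod m
  have hcop : Nat.Coprime p G := g_coprime m
  have hppos : 0 < p := g_pos m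
  have hqpos : 0 < q := g_pos (m+1)
  have hpq : p < q := g_lt m
  have hqG : q < G := g_lt (m+1)
  have hpG : p < G := lt_trans hpq hqG
  have hG1 : 1 ≤ G := by omega
  have hP : (0:ℝ) < p := by exact_mod_cast hppos
  have hQ : (0:ℝ) < q := by exact_mod_cast hqpos
  have hGR : (0:ℝ) < G := by exact_mod_cast (by omega : 0 < G)
  have hP1 : (1:ℝ) ≤ p := by exact_mod_cast hppos
  have hGple : (G:ℝ)/p ≤ G := div_le_self (le_of_lt hGR) hP1
  have hb1 : (1:ℝ) < (G:ℝ)/p := by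
    rw [lt_div_iff₀ hP, one_mul]
    exact_mod_cast hpG
  have hnotirr : ¬ Irrational ((G:ℝ)/p) := by
    intro h
    exact h ⟨(G:ℚ)/(p:ℚ), by push_cast; ring⟩
  rw [Kcap, if_neg hnotirr]
  set Sset := {x : ℝ | ∃ z, Irrational z ∧ 1 < z ∧ z < (G:ℝ)/(p:ℝ) ∧ x = Kirr z} with hSset
  -- every admissible z gives an element of Sset of size at least p z / q
  have hmemS : ∀ z : ℝ, Irrational z → max 1 ((G:ℝ)/p - 1/((p:ℝ)*(p:ℝ))) < z → z < (G:ℝ)/p →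
      Kirr z ∈ Sset ∧ (p:ℝ) * z / q ≤ Kirr z := by
    intro z hz hzl hzu
    rw [max_lt_iff] at hzl
    obtain ⟨hz1, hzlo⟩ := hzl
    have hzleG : z ≤ (G:ℝ) := le_trans (le_of_lt hzu) hGple
    have hcnt := count_exact p G hppos hpG hcop z hz hz1 hzlo hzu
    have hdeq := dAB_eq p q G hqpos z hcnt hid hsum
    have hbddr : BddAbove (Set.range fun pr : ℕ × ℕ => kAB z pr.1 pr.2) := by
      refine ⟨18*(G:ℝ)*G, ?_⟩
      rintro x ⟨pr, rfl⟩
      exact kAB_le G hG1 z (le_of_lt hz1) hzleG pr.1 pr.2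
    have hK1 : kAB z 0 p ≤ Kirr z := le_ciSup hbddr ((0:ℕ), p)
    have hkv : kAB z 0 p = (p:ℝ) * z / q := by
      rw [kAB, hdeq]
      push_cast
      ring
    rw [hkv] at hK1
    exact ⟨⟨z, hz, hz1, hzu, rfl⟩, hK1⟩
  have hbdd : BddAbove Sset := by
    refine ⟨18*(G:ℝ)*G, ?_⟩
    rintro x ⟨z, hz, h1, h2, rfl⟩
    rw [Kirr]
    exact ciSup_le fun pr => kAB_le G hG1 z (le_of_lt h1) (le_trans (le_of_lt h2) hGple) pr.1 pr.2
  have hlm : max 1 ((G:ℝ)/p - 1/((p:ℝ)*(p:ℝ))) < (G:ℝ)/p := by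
    rw [max_lt_iff]
    exact ⟨hb1, sub_lt_self _ (by positivity)⟩
  obtain ⟨z₀, hz₀irr, hz₀mem⟩ := dense_irrational.exists_between hlm
  have hne : Sset.Nonempty := ⟨Kirr z₀, (hmemS z₀ hz₀irr hz₀mem.1 hz₀mem.2).1⟩
  rw [le_csSup_iff hbdd hne]
  intro b hb
  by_contra hcon
  push_neg at hcon
  have hbqG : b * q < G := (lt_div_iff₀ hQ).mp hcon
  have hbq : b * q / p < (G:ℝ)/p := by
    apply div_lt_div_of_pos_right hbqG hP
  obtain ⟨z, hzirr, hzmem⟩ := dense_irrational.exists_between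
    (show max (max 1 ((G:ℝ)/p - 1/((p:ℝ)*(p:ℝ)))) (b*q/p) < (G:ℝ)/p from max_lt hlm hbq)
  obtain ⟨hzS, hzk⟩ := hmemS z hzirr (lt_of_le_of_lt (le_max_left _ _) hzmem.1) hzmem.2
  have hzb : b * q / p < z := lt_of_le_of_lt (le_max_right _ _) hzmem.1
  have hKb : Kirr z ≤ b := hb hzS
  have h1 : b * q < z * p := (div_lt_iff₀ hP).mp hzb
  have h2 : (p:ℝ) * z ≤ b * q := by
    rw [← div_le_iff₀ hQ]
    exact le_trans hzk hKb
  nlinarith
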